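/- Assume condition (6) holds. Then 𝔏_Λ contains no non-trivial idempotents: if E ∈ 𝔏_Λ satisfies E² = E, then E = 0 or E = I. -/

import Mathlib

noncomputable section

/-- Auxiliary recursion for the weight function: `W(u, []) = 1` and, reading the word
`w = i_k ⋯ i_1` as the list `[i_k, …, i_1]`,
`W(u, i :: w) = λ_{i, w·u} · W(u, w)`, so that
`W(u, i_k⋯i_1) = λ_{i_1,u} · λ_{i_2, i_1 u} ⋯ λ_{i_k, i_{k-1}⋯i_1 u}`. -/
def Waux {n : ℕ} (lam : Fin n → FreeMonoid (Fin n) → ℝ) (u : FreeMonoid (Fin n)) :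
    List (Fin n) → ℝ
  | [] => 1
  | i :: w => lam i (FreeMonoid.ofList w * u) * Waux lam u w

/-- The weight function `W : F_n^+ × F_n^+ → ℝ` associated to the weights `λ_{i,w}`. -/
def Wfun {n : ℕ} (lam : Fin n → FreeMonoid (Fin n) → ℝ) (u w : FreeMonoid (Fin n)) : ℝ :=
  Waux lam u (FreeMonoid.toList w)

instance {n : ℕ} : DecidableEq (FreeMonoid (Fin n)) := Classical.decEq _

/-- `n`-variable Fock space `H_n = ℓ²(F_n^+)`. -/
abbrev Hn (n : ℕ) : Type := lp (fun _ : FreeMonoid (Fin n) => ℂ) 2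

/-- The standard orthonormal basis vector `ξ_w` of `H_n`. -/
def xi {n : ℕ} (w : FreeMonoid (Fin n)) : Hn n := lp.single 2 w 1

/-- The unital WOT-closed algebra generated by a tuple of bounded operators on `H_n`:
the closure, in the weak operator topology, of the unital subalgebra they generate. -/
def wotAlg {n : ℕ} (T : Fin n → (Hn n →L[ℂ] Hn n)) : Set (Hn n →L[ℂ] Hn n) :=
  (ContinuousLinearMapWOT.ofCLM : (Hn n →L[ℂ] Hn n) → (Hn n →WOT[ℂ] Hn n)) ⁻¹'
    (closure ((ContinuousLinearMapWOT.ofCLM : (Hn n →L[ℂ] Hn n) → (Hn n →WOT[ℂ] Hn n)) ''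
      (Algebra.adjoin ℂ (Set.range T) : Subalgebra ℂ (Hn n →L[ℂ] Hn n))))

namespace NI

variable {n : ℕ}

/-- coordinate evaluation as a continuous linear functional on `Hn n`. -/
def ev (n : ℕ) (u : FreeMonoid (Fin n)) : Hn n →L[ℂ] ℂ :=
  LinearMap.mkContinuous
    { toFun := fun f => f u
      map_add' := fun f g => congrFun (lp.coeFn_add f g) u
      map_smul' := fun c f => congrFun (lp.coeFn_smul c f) u }
    1 (fun f => by
      simpa using lp.norm_apply_le_norm (by norm_num : (2 : ENNReal) ≠ 0) f u)

@[simp] lemma ev_apply (u : FreeMonoid (Fin n)) (f : Hn n) : ev n u f = f u := rfl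

lemma ev_xi (u w : FreeMonoid (Fin n)) : ev n u (xi w) = if u = w then 1 else 0 := by
  by_cases h : u = w
  · subst h; simp [xi, lp.single_apply_self]
  · rw [if_neg h]
    exact lp.single_apply_ne (E := fun _ : FreeMonoid (Fin n) => ℂ) 2 w (1 : ℂ) h

lemma Waux_pos (lam : Fin n → FreeMonoid (Fin n) → ℝ) (hpos : ∀ i w, 0 < lam i w)
    (u : FreeMonoid (Fin n)) : ∀ l, 0 < Waux lam u l
  | [] => one_pos
  | i :: w => mul_pos (hpos _ _) (Waux_pos lam hpos u w)

lemma Waux_append (lam : Fin n → FreeMonoid (Fin n) → ℝ) (u : FreeMonoid (Fin n)) :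
    ∀ (a b : List (Fin n)),
      Waux lam u (a ++ b) = Waux lam (FreeMonoid.ofList b * u) a * Waux lam u b
  | [], b => by simp [Waux]
  | i :: a, b => by
    have h : FreeMonoid.ofList (a ++ b) * u = FreeMonoid.ofList a * (FreeMonoid.ofList b * u) := by
      rw [← mul_assoc]; rfl
    show lam i (FreeMonoid.ofList (a ++ b) * u) * Waux lam u (a ++ b) = _
    rw [Waux_append lam u a b, h]
    show _ = lam i (FreeMonoid.ofList a * (FreeMonoid.ofList b * u)) * Waux lam (FreeMonoid.ofList b * u) a * Waux lam u b
    ring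

end NI

namespace NI
variable {n : ℕ}

/-- quotient word: `u` with the suffix `w` removed (when `w` is a suffix of `u`). -/
def qF (u w : FreeMonoid (Fin n)) : FreeMonoid (Fin n) :=
  FreeMonoid.ofList ((FreeMonoid.toList u).take
    ((FreeMonoid.toList u).length - (FreeMonoid.toList w).length))

lemma qF_mul {u w : FreeMonoid (Fin n)}
    (h : (FreeMonoid.toList w) <:+ (FreeMonoid.toList u)) : qF u w * w = u := by
  obtain ⟨t, ht⟩ := h
  apply FreeMonoid.toList.injective
  have h1 : (FreeMonoid.toList u).take ((FreeMonoid.toList u).length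
      - (FreeMonoid.toList w).length) = t := by
    rw [← ht, List.length_append, Nat.add_sub_cancel, List.take_left]
  show FreeMonoid.toList (qF u w) ++ FreeMonoid.toList w = FreeMonoid.toList u
  rw [qF, FreeMonoid.toList_ofList, h1, ht]

lemma qF_self (u : FreeMonoid (Fin n)) : qF u u = 1 := by
  simp [qF]

lemma mul_eq_iff {v w u : FreeMonoid (Fin n)} :
    v * w = u ↔ (FreeMonoid.toList w) <:+ (FreeMonoid.toList u) ∧ v = qF u w := by
  constructor
  · rintro rfl
    have hs : (FreeMonoid.toList w) <:+ (FreeMonoid.toList (v * w)) :=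
      ⟨FreeMonoid.toList v, rfl⟩
    refine ⟨hs, ?_⟩
    have := qF_mul hs
    exact mul_right_cancel (by rw [this])
  · rintro ⟨h, rfl⟩
    exact qF_mul h

/-- the ratio `W(w,v)/W(e,v)` as a complex number. -/
def rC (lam : Fin n → FreeMonoid (Fin n) → ℝ) (w v : FreeMonoid (Fin n)) : ℂ :=
  ((Wfun lam w v / Wfun lam 1 v : ℝ) : ℂ)

lemma rC_one (lam : Fin n → FreeMonoid (Fin n) → ℝ) (w : FreeMonoid (Fin n)) :
    rC lam w 1 = 1 := by
  simp [rC, Wfun, FreeMonoid.toList_one, Waux]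

/-- The key structural property of elements of the algebra. -/
def Good (lam : Fin n → FreeMonoid (Fin n) → ℝ) (A : Hn n →L[ℂ] Hn n) : Prop :=
  ∀ w u : FreeMonoid (Fin n),
    ev n u (A (xi w)) =
      (if (FreeMonoid.toList w) <:+ (FreeMonoid.toList u) then rC lam w (qF u w) else 0)
        * ev n (qF u w) (A (xi 1))

end NI

namespace NI
variable {n : ℕ}

lemma monoidAlgebra_mul_sum {M : Type*} [AddCommMonoid M]
    (c d : MonoidAlgebra ℂ (FreeMonoid (Fin n))) (F : FreeMonoid (Fin n) → ℂ → M)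
    (hF0 : ∀ x, F x 0 = 0) (hFadd : ∀ x b₁ b₂, F x (b₁ + b₂) = F x b₁ + F x b₂) :
    (c * d).coeff.sum F = c.coeff.sum fun v' a' => d.coeff.sum fun v a => F (v' * v) (a' * a) := by
  rw [MonoidAlgebra.mul_def]
  simp only [MonoidAlgebra.coeff_finsuppSum, MonoidAlgebra.coeff_single]
  rw [Finsupp.sum_sum_index hF0 hFadd]
  refine Finsupp.sum_congr fun v' _ => ?_
  rw [Finsupp.sum_sum_index hF0 hFadd]
  exact Finsupp.sum_congr fun v _ => Finsupp.sum_single_index (hF0 _)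

lemma rep_of_adjoin (lam : Fin n → FreeMonoid (Fin n) → ℝ)
    (T : Fin n → (Hn n →L[ℂ] Hn n))
    (hT : ∀ i w, T i (xi w) = (lam i w : ℂ) • xi (FreeMonoid.of i * w))
    {A : Hn n →L[ℂ] Hn n} (hA : A ∈ Algebra.adjoin ℂ (Set.range T)) :
    ∃ c : MonoidAlgebra ℂ (FreeMonoid (Fin n)), ∀ w,
      A (xi w) = c.coeff.sum fun v a => a • (((Wfun lam w v : ℝ) : ℂ) • xi (v * w)) := by
  induction hA using Algebra.adjoin_induction with
  | mem x hx =>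
    obtain ⟨i, rfl⟩ := hx
    refine ⟨MonoidAlgebra.single (FreeMonoid.of i) 1, fun w => ?_⟩
    rw [MonoidAlgebra.coeff_single, Finsupp.sum_single_index (by simp), hT]
    have hw : Wfun lam w (FreeMonoid.of i) = lam i w := by
      show Waux lam w [i] = lam i w
      show lam i (FreeMonoid.ofList [] * w) * Waux lam w [] = lam i w
      show lam i (1 * w) * 1 = lam i w
      rw [one_mul, mul_one]
    rw [hw, one_smul]
  | algebraMap r =>
    refine ⟨MonoidAlgebra.single 1 r, fun w => ?_⟩
    rw [MonoidAlgebra.coeff_single, Finsupp.sum_single_index (by simp)]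
    have h1 : Wfun lam w 1 = 1 := rfl
    rw [h1, Algebra.algebraMap_eq_smul_one, ContinuousLinearMap.smul_apply,
      ContinuousLinearMap.one_apply, Complex.ofReal_one, one_smul, one_mul]
  | add x y hx hy ihx ihy =>
    obtain ⟨c, hc⟩ := ihx
    obtain ⟨d, hd⟩ := ihy
    refine ⟨c + d, fun w => ?_⟩
    rw [ContinuousLinearMap.add_apply, hc, hd, MonoidAlgebra.coeff_add,
      Finsupp.sum_add_index (fun _ _ => by simp) (fun _ _ a b => by rw [add_smul])]
  | mul x y hx hy ihx ihy =>
    obtain ⟨c, hc⟩ := ihx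
    obtain ⟨d, hd⟩ := ihy
    refine ⟨c * d, fun w => ?_⟩
    rw [ContinuousLinearMap.mul_apply, hd, map_finsuppSum,
      monoidAlgebra_mul_sum c d _ (fun _ => by simp) (fun _ b₁ b₂ => by rw [add_smul]),
      Finsupp.sum_comm]
    refine Finsupp.sum_congr fun v _ => ?_
    set a := d.coeff v
    rw [map_smul, map_smul, hc, Finsupp.smul_sum, Finsupp.smul_sum]
    refine Finsupp.sum_congr fun v' _ => ?_
    set a' := c.coeff v'
    have hxiarg : v' * (v * w) = v' * v * w := (mul_assoc v' v w).symm
    have hW : (Wfun lam w (v' * v) : ℝ) = Wfun lam (v * w) v' * Wfun lam w v := by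
      show Waux lam w (FreeMonoid.toList v' ++ FreeMonoid.toList v) = _
      rw [Waux_append]
      have : FreeMonoid.ofList (FreeMonoid.toList v) * w = v * w := by
        rw [FreeMonoid.ofList_toList]
      rw [this]
      rfl
    rw [hxiarg, hW]
    simp only [smul_smul]
    push_cast
    ring_nf

end NI

namespace NI
variable {n : ℕ}

lemma good_of_rep (lam : Fin n → FreeMonoid (Fin n) → ℝ)
    (hpos : ∀ i w, 0 < lam i w) (A : Hn n →L[ℂ] Hn n)
    (c : MonoidAlgebra ℂ (FreeMonoid (Fin n)))
    (hc : ∀ w, A (xi w) = c.coeff.sum fun v a => a • (((Wfun lam w v : ℝ) : ℂ) • xi (v * w))) :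
    Good lam A := by
  have coord : ∀ w u : FreeMonoid (Fin n),
      ev n u (A (xi w)) =
        if (FreeMonoid.toList w) <:+ (FreeMonoid.toList u)
          then c.coeff (qF u w) * ((Wfun lam w (qF u w) : ℝ) : ℂ) else 0 := by
    intro w u
    rw [hc w, map_finsuppSum]
    have hterm : ∀ v : FreeMonoid (Fin n), ∀ a : ℂ,
        ev n u (a • (((Wfun lam w v : ℝ) : ℂ) • xi (v * w))) =
          if ((FreeMonoid.toList w) <:+ (FreeMonoid.toList u)) ∧ v = qF u w
            then a * ((Wfun lam w v : ℝ) : ℂ) else 0 := by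
      intro v a
      rw [map_smul, map_smul, ev_xi]
      by_cases h : v * w = u
      · rw [if_pos (Eq.comm.mp h), if_pos (mul_eq_iff.mp h)]
        simp [smul_eq_mul]
      · rw [if_neg fun hh => h hh.symm, if_neg fun hh => h (mul_eq_iff.mpr hh)]
        simp
    by_cases hs : (FreeMonoid.toList w) <:+ (FreeMonoid.toList u)
    · rw [if_pos hs]
      have : ∀ v ∈ c.coeff.support, ∀ a : ℂ,
          ev n u (a • (((Wfun lam w v : ℝ) : ℂ) • xi (v * w))) =
            if v = qF u w then a * ((Wfun lam w v : ℝ) : ℂ) else 0 := by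
        intro v _ a
        rw [hterm v a]
        by_cases h : v = qF u w
        · rw [if_pos ⟨hs, h⟩, if_pos h]
        · rw [if_neg fun hh => h hh.2, if_neg h]
      rw [Finsupp.sum_congr (g2 := fun v a => if v = qF u w then a * ((Wfun lam w v : ℝ) : ℂ) else 0)
        (fun v hv => this v hv (c.coeff v))]
      rw [Finsupp.sum_ite_eq' c.coeff (qF u w) (fun v a => a * ((Wfun lam w v : ℝ) : ℂ))]
      by_cases hmem : qF u w ∈ c.coeff.support
      · rw [if_pos hmem]
      · rw [if_neg hmem, Finsupp.notMem_support_iff.mp hmem, zero_mul]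
    · rw [if_neg hs]
      rw [Finsupp.sum_congr (g2 := fun v a =>
        if ((FreeMonoid.toList w) <:+ (FreeMonoid.toList u)) ∧ v = qF u w
          then a * ((Wfun lam w v : ℝ) : ℂ) else 0) (fun v _ => hterm v (c.coeff v))]
      refine Finset.sum_eq_zero fun v _ => ?_
      exact if_neg fun hh => hs hh.1
  intro w u
  rw [coord w u]
  have h1 : ev n (qF u w) (A (xi 1)) =
      c.coeff (qF u w) * ((Wfun lam 1 (qF u w) : ℝ) : ℂ) := by
    rw [coord 1 (qF u w)]
    rw [if_pos ⟨FreeMonoid.toList (qF u w), List.append_nil _⟩]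
    have hq : qF (qF u w) 1 = qF u w := by simp [qF]
    rw [hq]
  rw [h1]
  by_cases hs : (FreeMonoid.toList w) <:+ (FreeMonoid.toList u)
  · rw [if_pos hs, if_pos hs]
    have hne : Wfun lam 1 (qF u w) ≠ 0 := (Waux_pos lam hpos 1 _).ne'
    have hne' : ((Wfun lam 1 (qF u w) : ℝ) : ℂ) ≠ 0 := Complex.ofReal_ne_zero.mpr hne
    rw [rC, Complex.ofReal_div]
    field_simp
  · rw [if_neg hs, if_neg hs, zero_mul]

end NI

namespace NI
variable {n : ℕ}

lemma good_of_mem_wotAlg (lam : Fin n → FreeMonoid (Fin n) → ℝ)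
    (hpos : ∀ i w, 0 < lam i w) (T : Fin n → (Hn n →L[ℂ] Hn n))
    (hT : ∀ i w, T i (xi w) = (lam i w : ℂ) • xi (FreeMonoid.of i * w))
    {E : Hn n →L[ℂ] Hn n} (hE : E ∈ wotAlg T) : Good lam E := by
  classical
  set S : Set ((Hn n →WOT[ℂ] Hn n)) :=
    {A | ∀ w u : FreeMonoid (Fin n),
      ev n u (A (xi w)) =
        (if (FreeMonoid.toList w) <:+ (FreeMonoid.toList u) then rC lam w (qF u w) else 0)
          * ev n (qF u w) (A (xi 1))} with hS
  have hclosed : IsClosed S := by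
    have : S = ⋂ (w : FreeMonoid (Fin n)), ⋂ (u : FreeMonoid (Fin n)),
        {A : (Hn n →WOT[ℂ] Hn n) |
          ev n u (A (xi w)) =
            (if (FreeMonoid.toList w) <:+ (FreeMonoid.toList u) then rC lam w (qF u w) else 0)
              * ev n (qF u w) (A (xi 1))} := by
      ext A; simp [hS, Set.mem_iInter]
    rw [this]
    refine isClosed_iInter fun w => isClosed_iInter fun u => ?_
    exact isClosed_eq (ContinuousLinearMapWOT.continuous_dual_apply (xi w) (ev n u))
      (continuous_const.mul (ContinuousLinearMapWOT.continuous_dual_apply (xi 1) (ev n (qF u w))))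
  have himg : (ContinuousLinearMapWOT.ofCLM : (Hn n →L[ℂ] Hn n) → (Hn n →WOT[ℂ] Hn n)) ''
      (Algebra.adjoin ℂ (Set.range T) : Subalgebra ℂ (Hn n →L[ℂ] Hn n)) ⊆ S := by
    rintro _ ⟨A, hA, rfl⟩
    obtain ⟨c, hc⟩ := rep_of_adjoin lam T hT hA
    have hg := good_of_rep lam hpos A c hc
    intro w u
    rw [ContinuousLinearMap.toWOT_apply, ContinuousLinearMap.toWOT_apply]
    exact hg w u
  have hmem : (ContinuousLinearMapWOT.ofCLM : (Hn n →L[ℂ] Hn n) → (Hn n →WOT[ℂ] Hn n)) E ∈ S :=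
    closure_minimal himg hclosed hE
  intro w u
  have := hmem w u
  rwa [ContinuousLinearMap.toWOT_apply, ContinuousLinearMap.toWOT_apply] at this

lemma hasSum_coef (A : Hn n →L[ℂ] Hn n) (y : Hn n) (u : FreeMonoid (Fin n)) :
    HasSum (fun x => y x * ev n u (A (xi x))) (ev n u (A y)) := by
  have h1 : HasSum (fun x : FreeMonoid (Fin n) => lp.single 2 x (y x)) y :=
    lp.hasSum_single (by norm_num) y
  have h2 := h1.mapL ((ev n u).comp A)
  refine HasSum.congr_fun h2 fun x => ?_
  have hx : lp.single 2 x (y x) = y x • xi x := by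
    rw [xi, ← lp.single_smul, smul_eq_mul, mul_one]
  rw [hx]
  simp [smul_eq_mul]

end NI

namespace NI
variable {n : ℕ}

lemma eq_zero_of_good (lam : Fin n → FreeMonoid (Fin n) → ℝ)
    {E : Hn n →L[ℂ] Hn n} (hGood : Good lam E) (hidem : E * E = E)
    (h0 : ev n 1 (E (xi 1)) = 0) : E = 0 := by
  have key : ∀ k : ℕ, ∀ v : FreeMonoid (Fin n), (FreeMonoid.toList v).length = k →
      ev n v (E (xi 1)) = 0 := by
    intro k
    induction k using Nat.strong_induction_on with
    | _ k ih =>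
      intro v hv
      have hs := hasSum_coef E (E (xi 1)) v
      have hz : (fun x => (E (xi 1)) x * ev n v (E (xi x))) = fun _ => (0 : ℂ) := by
        funext x
        rw [hGood x v]
        by_cases hsuf : (FreeMonoid.toList x) <:+ (FreeMonoid.toList v)
        · by_cases hxv : (FreeMonoid.toList x).length = (FreeMonoid.toList v).length
          · have hq : qF v x = 1 := by
              have h0' : (FreeMonoid.toList v).length - (FreeMonoid.toList x).length = 0 := by
                omega
              simp [qF, h0']
            rw [hq, h0, mul_zero, mul_zero]
          · have hlt : (FreeMonoid.toList x).length < k := by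
              rw [← hv]
              exact lt_of_le_of_ne (List.IsSuffix.length_le hsuf) hxv
            have hx0 : ((E (xi 1)) x : ℂ) = 0 := ih _ hlt x rfl
            rw [hx0, zero_mul]
        · rw [if_neg hsuf, zero_mul, mul_zero]
      rw [hz] at hs
      have h1 : ev n v (E (E (xi 1))) = 0 := hs.unique hasSum_zero
      have h2 : E (E (xi 1)) = E (xi 1) := by
        rw [← ContinuousLinearMap.mul_apply, hidem]
      rwa [h2] at h1
  have hcoord : ∀ x u : FreeMonoid (Fin n), ev n u (E (xi x)) = 0 := by
    intro x u
    rw [hGood x u, key _ (qF u x) rfl, mul_zero]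
  refine ContinuousLinearMap.ext fun y => ?_
  refine lp.ext (funext fun u => ?_)
  have hs := hasSum_coef E y u
  have hz : (fun x => y x * ev n u (E (xi x))) = fun _ => (0 : ℂ) := by
    funext x; rw [hcoord x u, mul_zero]
  rw [hz] at hs
  have : ev n u (E y) = 0 := hs.unique hasSum_zero
  simpa using this

lemma good_one (lam : Fin n → FreeMonoid (Fin n) → ℝ) :
    Good lam (1 : Hn n →L[ℂ] Hn n) := by
  intro w u
  rw [ContinuousLinearMap.one_apply, ContinuousLinearMap.one_apply, ev_xi, ev_xi]
  by_cases h : u = w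
  · subst h
    rw [if_pos rfl, if_pos (List.suffix_refl _), qF_self, rC_one, if_pos rfl, mul_one]
  · rw [if_neg h]
    by_cases hsuf : (FreeMonoid.toList u) <:+ (FreeMonoid.toList u) ∧
        (FreeMonoid.toList w) <:+ (FreeMonoid.toList u)
    · rw [if_pos hsuf.2]
      have hne : qF u w ≠ 1 := by
        intro hq
        have hwu : w = u := by rw [← qF_mul hsuf.2, hq, one_mul]
        exact h hwu.symm
      rw [if_neg hne, mul_zero]
    · have hsuf' : ¬ (FreeMonoid.toList w) <:+ (FreeMonoid.toList u) := by
        intro hh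
        exact hsuf ⟨List.suffix_refl _, hh⟩
      rw [if_neg hsuf', zero_mul]

lemma good_sub (lam : Fin n → FreeMonoid (Fin n) → ℝ) {A B : Hn n →L[ℂ] Hn n}
    (hA : Good lam A) (hB : Good lam B) : Good lam (A - B) := by
  intro w u
  rw [ContinuousLinearMap.sub_apply, ContinuousLinearMap.sub_apply, map_sub, map_sub,
    hA w u, hB w u, mul_sub]

end NI


/-- Assume condition (6) holds. Then `𝔏_Λ` contains no non-trivial
idempotents: if `E ∈ 𝔏_Λ` satisfies `E² = E`, then `E = 0` or `E = I`. -/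
theorem LLambda_no_nontrivial_idempotents (n : ℕ) (hn : 2 ≤ n)
    (lam : Fin n → FreeMonoid (Fin n) → ℝ)
    (hpos : ∀ i w, 0 < lam i w) (hbdd : ∃ C : ℝ, ∀ i w, lam i w ≤ C)
    (h6 : ∃ C : ℝ, ∀ i w, Wfun lam (FreeMonoid.of i) w * (Wfun lam 1 w)⁻¹ ≤ C)
    (T : Fin n → (Hn n →L[ℂ] Hn n))
    (hT : ∀ i w, T i (xi w) = (lam i w : ℂ) • xi (FreeMonoid.of i * w))
    (E : Hn n →L[ℂ] Hn n) (hE : E ∈ wotAlg T) (hidem : E * E = E) :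
    E = 0 ∨ E = 1 := by
  have hGood : NI.Good lam E := NI.good_of_mem_wotAlg lam hpos T hT hE
  set a1 : ℂ := NI.ev n 1 (E (xi 1)) with ha1
  have hs := NI.hasSum_coef E (E (xi 1)) 1
  have hz : (fun x => (E (xi 1)) x * NI.ev n 1 (E (xi x))) =
      fun x => if x = 1 then a1 * a1 else 0 := by
    funext x
    rw [hGood x 1]
    by_cases hx : x = (1 : FreeMonoid (Fin n))
    · subst hx
      rw [if_pos rfl, if_pos (List.suffix_refl _), NI.qF_self, NI.rC_one, one_mul]
      rfl
    · have hsuf : ¬ (FreeMonoid.toList x) <:+ (FreeMonoid.toList (1 : FreeMonoid (Fin n))) := by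
        intro hh
        have := List.suffix_nil.mp hh
        exact hx (FreeMonoid.toList.injective this)
      rw [if_neg hsuf, if_neg hx, zero_mul, mul_zero]
  rw [hz] at hs
  have h1 : E (E (xi 1)) = E (xi 1) := by
    rw [← ContinuousLinearMap.mul_apply, hidem]
  rw [h1] at hs
  have hsq : a1 * a1 = a1 := (hs.unique (hasSum_ite_eq 1 (a1 * a1))).symm
  have hcases : a1 = 0 ∨ a1 = 1 := by
    rcases mul_eq_zero.mp (show a1 * (a1 - 1) = 0 by rw [mul_sub, hsq, mul_one, sub_self]) with h | h
    · exact Or.inl h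
    · exact Or.inr (by linear_combination h)
  rcases hcases with h | h
  · exact Or.inl (NI.eq_zero_of_good lam hGood hidem (ha1 ▸ h))
  · right
    have hGoodF : NI.Good lam (1 - E) := NI.good_sub lam (NI.good_one lam) hGood
    have hidemF : (1 - E) * (1 - E) = 1 - E := by
      rw [sub_mul, one_mul, mul_sub, mul_one, hidem]
      abel
    have h0F : NI.ev n 1 ((1 - E) (xi 1)) = 0 := by
      rw [ContinuousLinearMap.sub_apply, ContinuousLinearMap.one_apply, map_sub, NI.ev_xi,
        if_pos rfl, ← ha1, h, sub_self]
    have := NI.eq_zero_of_good lam hGoodF hidemF h0F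
    have h1E : (1 : Hn n →L[ℂ] Hn n) = E := by
      have := sub_eq_zero.mp this
      exact this
    exact h1E.symm
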